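/- arXiv:2107.06091 — 4 statements merged into one kernel-verified Lean document; each statement's English description precedes it below -/
import Mathlib

section
/- Let n ≥ 1 and let S be a real symmetric positive definite n×n matrix with eigenpairs (λ_1,d_1),…,(λ_n,d_n) (eigenvalues listed with multiplicity, eigenvectors orthonormal) ranked in increasing ℓ-order, i.e. ℓ(λ_1) ≤ ⋯ ≤ ℓ(λ_n). Then for every 1 ≤ k ≤ n, the matrix Σ*_k = I_n + Σ_{i=1}^k (λ_i − 1) d_i d_iᵀ belongs to L_{n,k} and minimizes D' over L_{n,k}: for every Σ ∈ L_{n,k}, D'(Σ*_k) ≤ D'(Σ). -/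
open Matrix

noncomputable def ell (x : ℝ) : ℝ := Real.log x - x + 1

noncomputable def Dp {n : ℕ} (S A : Matrix (Fin n) (Fin n) ℝ) : ℝ :=
  Real.log A.det + (S * A⁻¹).trace

def Lnk (n k : ℕ) : Set (Matrix (Fin n) (Fin n) ℝ) :=
  {M | ∃ (α : Fin k → ℝ) (d : Fin k → Fin n → ℝ),
    (∀ i, 0 < α i) ∧ (∀ i j, d i ⬝ᵥ d j = if i = j then (1 : ℝ) else 0) ∧
    M = 1 + ∑ i, (α i - 1) • Matrix.vecMulVec (d i) (d i)}


lemma mul_vecMulVec' {n m : ℕ} (A : Matrix (Fin n) (Fin n) ℝ) (u : Fin n → ℝ) (v : Fin m → ℝ) :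
    A * vecMulVec u v = vecMulVec (A *ᵥ u) v := by
  ext a b
  simp [Matrix.mul_apply, vecMulVec_apply, Matrix.mulVec, dotProduct, Finset.sum_mul, mul_assoc]

lemma vecMulVec_mul_vecMulVec {n : ℕ} (u v x y : Fin n → ℝ) :
    vecMulVec u v * vecMulVec x y = (v ⬝ᵥ x) • vecMulVec u y := by
  ext a b
  simp [Matrix.mul_apply, vecMulVec_apply, dotProduct, Finset.sum_mul, Finset.mul_sum]
  ring_nf
  exact Finset.sum_congr rfl (fun i _ => by ring)

lemma trace_mul_vecMulVec {n : ℕ} (S : Matrix (Fin n) (Fin n) ℝ) (u v : Fin n → ℝ) :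
    (S * vecMulVec u v).trace = v ⬝ᵥ (S *ᵥ u) := by
  simp [Matrix.trace, Matrix.diag, Matrix.mul_apply, vecMulVec_apply, dotProduct, Matrix.mulVec,
    Finset.mul_sum]
  exact Finset.sum_congr rfl (fun i _ => Finset.sum_congr rfl (fun j _ => by ring))

lemma det_one_add_smul_vecMulVec {n : ℕ} (c : ℝ) (u : Fin n → ℝ) :
    (1 + c • vecMulVec u u).det = 1 + c * (u ⬝ᵥ u) := by
  have := Matrix.det_one_add_replicateCol_mul_replicateRow (ι := Unit) (c • u) u
  rw [← vecMulVec_eq] at this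
  rw [show c • vecMulVec u u = vecMulVec (c • u) u by ext a b; simp [vecMulVec_apply]; ring]
  rw [this, dotProduct_smul, smul_eq_mul]

lemma vecMulVec_mulVec' {n : ℕ} (u v w : Fin n → ℝ) :
    vecMulVec u v *ᵥ w = (v ⬝ᵥ w) • u := by
  ext a
  simp [Matrix.mulVec, dotProduct, vecMulVec_apply, Finset.sum_mul, Finset.mul_sum, mul_assoc,
    mul_comm]
  exact Finset.sum_congr rfl fun i _ => by ring

lemma sum_smul_vecMulVec_mul {n k : ℕ} (α β : Fin k → ℝ) (f : Fin k → Fin n → ℝ)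
    (horth : ∀ i j, f i ⬝ᵥ f j = if i = j then (1:ℝ) else 0) :
    (∑ i, (α i) • vecMulVec (f i) (f i)) * (∑ j, (β j) • vecMulVec (f j) (f j)) =
      ∑ i, (α i * β i) • vecMulVec (f i) (f i) := by
  rw [Finset.sum_mul]
  refine Finset.sum_congr rfl fun i _ => ?_
  rw [Finset.mul_sum]
  rw [Finset.sum_eq_single i]
  · rw [smul_mul_smul_comm, vecMulVec_mul_vecMulVec, horth i i]
    simp
  · intro j _ hj
    rw [smul_mul_smul_comm, vecMulVec_mul_vecMulVec, horth i j, if_neg (Ne.symm hj)]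
    simp
  · simp

lemma mul_inv_candidate {n k : ℕ} (α : Fin k → ℝ) (f : Fin k → Fin n → ℝ)
    (hα : ∀ i, 0 < α i)
    (horth : ∀ i j, f i ⬝ᵥ f j = if i = j then (1:ℝ) else 0) :
    (1 + ∑ i, (α i - 1) • vecMulVec (f i) (f i)) *
      (1 + ∑ i, ((α i)⁻¹ - 1) • vecMulVec (f i) (f i)) = 1 := by
  rw [add_mul, mul_add, mul_add, one_mul, one_mul, mul_one,
    sum_smul_vecMulVec_mul _ _ _ horth]
  have : (∑ i, ((α i)⁻¹ - 1) • vecMulVec (f i) (f i))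
      + ((∑ i, (α i - 1) • vecMulVec (f i) (f i))
      + ∑ i, ((α i - 1) * ((α i)⁻¹ - 1)) • vecMulVec (f i) (f i)) = 0 := by
    rw [← Finset.sum_add_distrib, ← Finset.sum_add_distrib]
    refine Finset.sum_eq_zero fun i _ => ?_
    rw [← add_smul, ← add_smul]
    have hne := (hα i).ne'
    have h : ((α i)⁻¹ - 1) + ((α i - 1) + (α i - 1) * ((α i)⁻¹ - 1)) = 0 := by
      field_simp
      ring
    rw [h, zero_smul]
  rw [add_assoc, this, add_zero]

lemma det_one_add_sum {n k : ℕ} (α : Fin k → ℝ) (f : Fin k → Fin n → ℝ)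
    (horth : ∀ i j, f i ⬝ᵥ f j = if i = j then (1:ℝ) else 0) (T : Finset (Fin k)) :
    (1 + ∑ i ∈ T, (α i - 1) • vecMulVec (f i) (f i)).det = ∏ i ∈ T, α i := by
  induction T using Finset.induction_on with
  | empty => simp
  | @insert a T ha ih =>
    have hsplit : (1 : Matrix (Fin n) (Fin n) ℝ) + ∑ i ∈ insert a T, (α i - 1) • vecMulVec (f i) (f i)
        = (1 + ∑ i ∈ T, (α i - 1) • vecMulVec (f i) (f i)) *
          (1 + (α a - 1) • vecMulVec (f a) (f a)) := by
      rw [mul_add, mul_one, mul_smul_comm, add_mul, one_mul, Finset.sum_mul]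
      have hz : (∑ i ∈ T, ((α i - 1) • vecMulVec (f i) (f i)) * vecMulVec (f a) (f a)) = 0 := by
        refine Finset.sum_eq_zero fun i hi => ?_
        rw [smul_mul_assoc, vecMulVec_mul_vecMulVec, horth i a,
          if_neg (by rintro rfl; exact ha hi), zero_smul, smul_zero]
      rw [hz, add_zero, Finset.sum_insert ha]
      abel
    rw [hsplit, Matrix.det_mul, ih, det_one_add_smul_vecMulVec, horth a a, if_pos rfl,
      Finset.prod_insert ha]
    ring

lemma Dp_formula {n k : ℕ} (S : Matrix (Fin n) (Fin n) ℝ) (α : Fin k → ℝ)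
    (f : Fin k → Fin n → ℝ) (hα : ∀ i, 0 < α i)
    (horth : ∀ i j, f i ⬝ᵥ f j = if i = j then (1:ℝ) else 0) :
    Dp S (1 + ∑ i, (α i - 1) • vecMulVec (f i) (f i)) =
      (∑ i, Real.log (α i)) + S.trace + ∑ i, ((α i)⁻¹ - 1) * (f i ⬝ᵥ S *ᵥ f i) := by
  have hinv : (1 + ∑ i, (α i - 1) • vecMulVec (f i) (f i))⁻¹
      = 1 + ∑ i, ((α i)⁻¹ - 1) • vecMulVec (f i) (f i) :=
    Matrix.inv_eq_right_inv (mul_inv_candidate α f hα horth)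
  have hdet : (1 + ∑ i, (α i - 1) • vecMulVec (f i) (f i)).det = ∏ i, α i :=
    det_one_add_sum α f horth _
  rw [Dp, hinv, hdet, Real.log_prod (fun i _ => (hα i).ne'), mul_add, mul_one,
    Matrix.trace_add, Finset.mul_sum, Matrix.trace_sum, add_assoc]
  congr 1
  congr 1
  refine Finset.sum_congr rfl fun i _ => ?_
  rw [mul_smul_comm, Matrix.trace_smul, trace_mul_vecMulVec, smul_eq_mul]

lemma scalar_bound {s α : ℝ} (hs : 0 < s) (hα : 0 < α) :
    ell s ≤ Real.log α + (α⁻¹ - 1) * s := by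
  have h := Real.log_le_sub_one_of_pos (div_pos hs hα)
  rw [Real.log_div hs.ne' hα.ne'] at h
  have hd : s / α = α⁻¹ * s := by rw [div_eq_mul_inv]; ring
  rw [hd] at h
  simp only [ell]
  nlinarith

section spectral
variable {n : ℕ} (S : Matrix (Fin n) (Fin n) ℝ) (lam : Fin n → ℝ) (d : Fin n → Fin n → ℝ)

lemma spectral_quadform (heig : ∀ i, S *ᵥ d i = lam i • d i)
    (horth : ∀ i j, d i ⬝ᵥ d j = if i = j then (1:ℝ) else 0) (v : Fin n → ℝ) :
    v ⬝ᵥ (S *ᵥ v) = ∑ j, lam j * (v ⬝ᵥ d j)^2 := by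
  set D : Matrix (Fin n) (Fin n) ℝ := Matrix.of d with hD
  have hDDt : D * Dᵀ = 1 := by
    ext i j
    simpa [hD, Matrix.mul_apply, Matrix.one_apply, dotProduct] using horth i j
  have hDtD : Dᵀ * D = 1 := mul_eq_one_comm.mp hDDt
  have hSD : S * Dᵀ = Dᵀ * Matrix.diagonal lam := by
    ext a i
    have h1 : (S * Dᵀ) a i = (S *ᵥ d i) a := by
      simp [Matrix.mul_apply, Matrix.mulVec, dotProduct, hD]
    rw [h1, heig i]
    simp [Matrix.mul_apply, Matrix.diagonal, hD, Matrix.transpose_apply, mul_comm]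
  have hS : S = Dᵀ * Matrix.diagonal lam * D := by
    calc S = S * (Dᵀ * D) := by rw [hDtD, mul_one]
    _ = (S * Dᵀ) * D := by rw [mul_assoc]
    _ = Dᵀ * Matrix.diagonal lam * D := by rw [hSD]
  rw [hS]
  rw [← Matrix.mulVec_mulVec, ← Matrix.mulVec_mulVec, Matrix.dotProduct_mulVec,
    Matrix.vecMul_transpose]
  simp only [dotProduct, Matrix.mulVec_diagonal]
  refine Finset.sum_congr rfl fun j _ => ?_
  have : (D *ᵥ v) j = v ⬝ᵥ d j := by
    simp [Matrix.mulVec, dotProduct, hD, mul_comm]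
  rw [this]; simp only [dotProduct]; ring

lemma spectral_complete
    (horth : ∀ i j, d i ⬝ᵥ d j = if i = j then (1:ℝ) else 0) (v : Fin n → ℝ) :
    ∑ j, (v ⬝ᵥ d j)^2 = v ⬝ᵥ v := by
  set D : Matrix (Fin n) (Fin n) ℝ := Matrix.of d with hD
  have hDDt : D * Dᵀ = 1 := by
    ext i j
    simpa [hD, Matrix.mul_apply, Matrix.one_apply, dotProduct] using horth i j
  have hDtD : Dᵀ * D = 1 := mul_eq_one_comm.mp hDDt
  have h1 : v ⬝ᵥ v = v ⬝ᵥ ((Dᵀ * D) *ᵥ v) := by rw [hDtD, Matrix.one_mulVec]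
  rw [h1, ← Matrix.mulVec_mulVec, Matrix.dotProduct_mulVec, Matrix.vecMul_transpose]
  simp only [dotProduct]
  refine Finset.sum_congr rfl fun j _ => ?_
  have : (D *ᵥ v) j = v ⬝ᵥ d j := by
    simp [Matrix.mulVec, dotProduct, hD, mul_comm]
  rw [this]; simp only [dotProduct]; ring

end spectral

lemma bessel {n k : ℕ} (f : Fin k → Fin n → ℝ)
    (horth : ∀ i j, f i ⬝ᵥ f j = if i = j then (1:ℝ) else 0) (g : Fin n → ℝ) :
    ∑ i, (f i ⬝ᵥ g)^2 ≤ g ⬝ᵥ g := by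
  set F : Matrix (Fin k) (Fin n) ℝ := Matrix.of f with hF
  have hFFt : F * Fᵀ = 1 := by
    ext i j
    simpa [hF, Matrix.mul_apply, Matrix.one_apply, dotProduct] using horth i j
  have hFg : ∀ i, (F *ᵥ g) i = f i ⬝ᵥ g := fun i => by
    simp [Matrix.mulVec, dotProduct, hF]
  have hsum : ∑ i, (f i ⬝ᵥ g)^2 = (F *ᵥ g) ⬝ᵥ (F *ᵥ g) := by
    simp only [dotProduct, hFg]
    exact Finset.sum_congr rfl fun i _ => by ring
  have key : ∀ a : Fin n → ℝ, a ⬝ᵥ (Fᵀ *ᵥ (F *ᵥ g)) = (F *ᵥ a) ⬝ᵥ (F *ᵥ g) := fun a => by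
    rw [Matrix.dotProduct_mulVec, Matrix.vecMul_transpose]
  set w : Fin n → ℝ := g - Fᵀ *ᵥ (F *ᵥ g) with hw
  have hww : (0:ℝ) ≤ w ⬝ᵥ w := Finset.sum_nonneg fun i _ => mul_self_nonneg _
  have hexp : w ⬝ᵥ w = g ⬝ᵥ g - (F *ᵥ g) ⬝ᵥ (F *ᵥ g) := by
    rw [hw, sub_dotProduct, dotProduct_sub, dotProduct_sub]
    rw [key g]
    have h2 : (Fᵀ *ᵥ (F *ᵥ g)) ⬝ᵥ g = (F *ᵥ g) ⬝ᵥ (F *ᵥ g) := by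
      rw [dotProduct_comm, key g]
    have h3 : (Fᵀ *ᵥ (F *ᵥ g)) ⬝ᵥ (Fᵀ *ᵥ (F *ᵥ g)) = (F *ᵥ g) ⬝ᵥ (F *ᵥ g) := by
      rw [key (Fᵀ *ᵥ (F *ᵥ g)), Matrix.mulVec_mulVec, hFFt, Matrix.one_mulVec]
    rw [h2, h3]; ring
  rw [hsum]
  linarith [hww, hexp]

lemma ell_concave : ConcaveOn ℝ (Set.Ioi 0) ell := by
  have h1 : ConcaveOn ℝ (Set.Ioi 0) Real.log := strictConcaveOn_log_Ioi.concaveOn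
  have h2 : ConcaveOn ℝ (Set.Ioi 0) (fun x : ℝ => -x + 1) := by
    refine ⟨convex_Ioi 0, fun x _ y _ a b ha hb hab => ?_⟩
    simp only [smul_eq_mul]
    nlinarith
  have h3 := h1.add h2
  have : ell = Real.log + (fun x : ℝ => -x + 1) := by
    funext x; simp [ell]; ring
  rw [this]
  exact h3

lemma jensen_ell {n : ℕ} (w lam : Fin n → ℝ) (hw0 : ∀ j, 0 ≤ w j) (hw1 : ∑ j, w j = 1)
    (hlam : ∀ j, 0 < lam j) :
    ∑ j, w j * ell (lam j) ≤ ell (∑ j, w j * lam j) := by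
  have := ell_concave.le_map_sum (t := Finset.univ) (w := w) (p := lam)
    (fun j _ => hw0 j) hw1 (fun j _ => hlam j)
  simpa [smul_eq_mul] using this

lemma rearrange {n k : ℕ} (hk1 : 1 ≤ k) (hkn : k ≤ n) (v c : Fin n → ℝ)
    (hmono : ∀ i j : Fin n, i ≤ j → v i ≤ v j)
    (hc0 : ∀ j, 0 ≤ c j) (hc1 : ∀ j, c j ≤ 1) (hcsum : ∑ j, c j = k) :
    ∑ i : Fin k, v (Fin.castLE hkn i) ≤ ∑ j, c j * v j := by
  have hkn' : k - 1 < n := by omega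
  set m : Fin n := ⟨k - 1, hkn'⟩ with hm
  set t : ℝ := v m with ht
  -- termwise bound
  have key : ∀ j : Fin n,
      (if (j : ℕ) < k then v j + (c j - 1) * t else c j * t) ≤ c j * v j := by
    intro j
    by_cases hj : (j : ℕ) < k
    · rw [if_pos hj]
      have hjm : j ≤ m := by simp [hm, Fin.le_def]; omega
      have := hmono j m hjm
      nlinarith [hc1 j]
    · rw [if_neg hj]
      have hmj : m ≤ j := by simp [hm, Fin.le_def]; omega
      have := hmono m j hmj
      nlinarith [hc0 j]
  have hsum_le : ∑ j : Fin n, (if (j : ℕ) < k then v j + (c j - 1) * t else c j * t)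
      ≤ ∑ j, c j * v j :=
    Finset.sum_le_sum fun j _ => key j
  -- rewrite LHS sum
  set g : ℕ → ℝ := fun p => if h : p < n then v ⟨p, h⟩ else 0 with hg
  have hrange : ∀ (u : ℕ → ℝ), ∑ j : Fin n, (if (j:ℕ) < k then u j else 0)
      = ∑ p ∈ Finset.range k, u p := by
    intro u
    rw [Fin.sum_univ_eq_sum_range (fun p => if p < k then u p else 0) n, ← Finset.sum_filter]
    congr 1
    ext a
    simp only [Finset.mem_filter, Finset.mem_range]
    omega
  have hsplit : ∑ j : Fin n, (if (j : ℕ) < k then v j + (c j - 1) * t else c j * t)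
      = (∑ j : Fin n, (if (j:ℕ) < k then v j else 0)) + (∑ j, c j) * t
        - (∑ j : Fin n, (if (j:ℕ) < k then t else 0)) := by
    rw [Finset.sum_mul, ← Finset.sum_add_distrib, ← Finset.sum_sub_distrib]
    refine Finset.sum_congr rfl fun j _ => ?_
    split <;> ring
  have e1 : ∑ j : Fin n, (if (j:ℕ) < k then v j else 0) = ∑ p ∈ Finset.range k, g p := by
    rw [← hrange g]
    refine Finset.sum_congr rfl fun j _ => ?_
    have : g (j:ℕ) = v j := by simp [hg]
    rw [this]
  have e2 : ∑ j : Fin n, (if (j:ℕ) < k then t else 0) = (k:ℝ) * t := by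
    rw [hrange (fun _ => t), Finset.sum_const, Finset.card_range, nsmul_eq_mul]
  have e0 : ∑ i : Fin k, v (Fin.castLE hkn i) = ∑ p ∈ Finset.range k, g p := by
    rw [← Fin.sum_univ_eq_sum_range (fun p => g p) k]
    refine Finset.sum_congr rfl fun i _ => ?_
    have h : (i : ℕ) < n := lt_of_lt_of_le i.isLt hkn
    have : g (i : ℕ) = v ⟨(i:ℕ), h⟩ := by simp [hg, dif_pos h]
    rw [this]
    rfl
  calc ∑ i : Fin k, v (Fin.castLE hkn i) = ∑ p ∈ Finset.range k, g p := e0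
    _ = ∑ j : Fin n, (if (j:ℕ) < k then v j else 0) := e1.symm
    _ = ∑ j : Fin n, (if (j : ℕ) < k then v j + (c j - 1) * t else c j * t) := by
        rw [hsplit, hcsum, e2]; ring
    _ ≤ ∑ j, c j * v j := hsum_le

theorem stmt_0 {n : ℕ} (hn : 1 ≤ n) (S : Matrix (Fin n) (Fin n) ℝ) (hS : S.PosDef)
    (lam : Fin n → ℝ) (d : Fin n → Fin n → ℝ)
    (heig : ∀ i, S *ᵥ d i = lam i • d i)
    (horth : ∀ i j, d i ⬝ᵥ d j = if i = j then (1 : ℝ) else 0)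
    (hord : ∀ i j : Fin n, i ≤ j → ell (lam i) ≤ ell (lam j))
    (k : ℕ) (hk1 : 1 ≤ k) (hkn : k ≤ n) :
    (1 + ∑ i : Fin k, (lam (Fin.castLE hkn i) - 1) •
        Matrix.vecMulVec (d (Fin.castLE hkn i)) (d (Fin.castLE hkn i))) ∈ Lnk n k ∧
    ∀ M ∈ Lnk n k,
      Dp S (1 + ∑ i : Fin k, (lam (Fin.castLE hkn i) - 1) •
        Matrix.vecMulVec (d (Fin.castLE hkn i)) (d (Fin.castLE hkn i))) ≤ Dp S M := by
  have hdd : ∀ j, d j ⬝ᵥ d j = 1 := fun j => by simpa using horth j j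
  have hdne : ∀ j, d j ≠ 0 := by
    intro j h
    have := hdd j
    rw [h] at this
    simp at this
  have hquad : ∀ j, 0 < d j ⬝ᵥ (S *ᵥ d j) := fun j => by
    have := hS.dotProduct_mulVec_pos (hdne j)
    simpa using this
  have hlam : ∀ j, 0 < lam j := fun j => by
    have h := hquad j
    rw [heig j] at h
    simpa [hdd j] using h
  have horth' : ∀ i j : Fin k, d (Fin.castLE hkn i) ⬝ᵥ d (Fin.castLE hkn j)
      = if i = j then (1:ℝ) else 0 := by
    intro i j
    rw [horth]
    simp [Fin.castLE_inj]
  refine ⟨⟨fun i => lam (Fin.castLE hkn i), fun i => d (Fin.castLE hkn i),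
    fun i => hlam _, horth', rfl⟩, ?_⟩
  rintro M ⟨β, f, hβ, hforth, rfl⟩
  rw [Dp_formula S _ _ hβ hforth, Dp_formula S _ _ (fun i => hlam _) horth']
  -- value at the optimum
  have hsopt : ∀ i : Fin k,
      d (Fin.castLE hkn i) ⬝ᵥ (S *ᵥ d (Fin.castLE hkn i)) = lam (Fin.castLE hkn i) := fun i => by
    rw [heig]
    simp [hdd]
  have hLHS : (∑ i : Fin k, Real.log (lam (Fin.castLE hkn i)))
      + ∑ i : Fin k, ((lam (Fin.castLE hkn i))⁻¹ - 1)
        * (d (Fin.castLE hkn i) ⬝ᵥ S *ᵥ d (Fin.castLE hkn i))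
      = ∑ i : Fin k, ell (lam (Fin.castLE hkn i)) := by
    rw [← Finset.sum_add_distrib]
    refine Finset.sum_congr rfl fun i _ => ?_
    rw [hsopt i, ell]
    have hne := (hlam (Fin.castLE hkn i)).ne'
    field_simp
    ring
  -- bounds for M
  set s : Fin k → ℝ := fun i => f i ⬝ᵥ (S *ᵥ f i) with hs
  have hfdd : ∀ i, f i ⬝ᵥ f i = 1 := fun i => by simpa using hforth i i
  have hfne : ∀ i, f i ≠ 0 := by
    intro i h
    have := hfdd i
    rw [h] at this
    simp at this
  have hspos : ∀ i, 0 < s i := fun i => by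
    have := hS.dotProduct_mulVec_pos (hfne i)
    simpa [hs] using this
  have step1 : ∀ i, ell (s i) ≤ Real.log (β i) + ((β i)⁻¹ - 1) * s i :=
    fun i => scalar_bound (hspos i) (hβ i)
  have step2 : ∀ i, ∑ j, (f i ⬝ᵥ d j)^2 * ell (lam j) ≤ ell (s i) := by
    intro i
    have hw1 : ∑ j, (f i ⬝ᵥ d j)^2 = 1 := by
      rw [spectral_complete d horth (f i), hfdd i]
    have hj := jensen_ell (fun j => (f i ⬝ᵥ d j)^2) lam (fun j => sq_nonneg _) hw1 hlam
    have hsi : ∑ j, (f i ⬝ᵥ d j)^2 * lam j = s i := by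
      show _ = f i ⬝ᵥ (S *ᵥ f i)
      rw [spectral_quadform S lam d heig horth (f i)]
      exact Finset.sum_congr rfl fun j _ => by ring
    rwa [hsi] at hj
  set c : Fin n → ℝ := fun j => ∑ i, (f i ⬝ᵥ d j)^2 with hc
  have hc0 : ∀ j, 0 ≤ c j := fun j => Finset.sum_nonneg fun i _ => sq_nonneg _
  have hc1 : ∀ j, c j ≤ 1 := fun j => by
    have := bessel f hforth (d j)
    rwa [hdd j] at this
  have hcsum : ∑ j, c j = (k:ℝ) := by
    rw [hc]
    rw [Finset.sum_comm]
    have : ∀ i : Fin k, ∑ j, (f i ⬝ᵥ d j)^2 = 1 := fun i => by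
      rw [spectral_complete d horth (f i), hfdd i]
    rw [Finset.sum_congr rfl fun i _ => this i]
    simp
  have step3 : ∑ j, c j * ell (lam j) ≤ ∑ i, ell (s i) := by
    calc ∑ j, c j * ell (lam j) = ∑ i, ∑ j, (f i ⬝ᵥ d j)^2 * ell (lam j) := by
          rw [Finset.sum_comm]
          refine Finset.sum_congr rfl fun j _ => ?_
          rw [hc, Finset.sum_mul]
      _ ≤ ∑ i, ell (s i) := Finset.sum_le_sum fun i _ => step2 i
  have step4 : ∑ i : Fin k, ell (lam (Fin.castLE hkn i)) ≤ ∑ j, c j * ell (lam j) :=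
    rearrange hk1 hkn (fun j => ell (lam j)) c hord hc0 hc1 hcsum
  have step5 : ∑ i, ell (s i) ≤ ∑ i, (Real.log (β i) + ((β i)⁻¹ - 1) * s i) :=
    Finset.sum_le_sum fun i _ => step1 i
  rw [Finset.sum_add_distrib] at step5
  linarith [step3, step4, step5, hLHS]
end

section
/- Let S be a real symmetric positive definite n×n matrix and let d_1,…,d_k ∈ ℝ^n be orthonormal vectors. For v = (v_1,…,v_k) ∈ (0,∞)^k set Σ(v) = I_n + Σ_{i=1}^k (v_i − 1) d_i d_iᵀ. Then for every v ∈ (0,∞)^k, D'(Σ(v)) ≥ Σ_{i=1}^k ℓ(d_iᵀ S d_i) + tr(S), with equality if and only if v_i = d_iᵀ S d_i for every i = 1,…,k. -/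
open Matrix

variable {n : ℕ}

lemma vmv_mul_vmv (a b c e : Fin n → ℝ) :
    vecMulVec a b * vecMulVec c e = (b ⬝ᵥ c) • vecMulVec a e := by
  ext i j
  simp [mul_apply, vecMulVec_apply, dotProduct, Finset.sum_mul]
  exact Finset.sum_congr rfl fun l _ => by ring

lemma trace_mul_vmv (S : Matrix (Fin n) (Fin n) ℝ) (a : Fin n → ℝ) :
    (S * vecMulVec a a).trace = a ⬝ᵥ S *ᵥ a := by
  simp only [trace, Matrix.diag, mul_apply, vecMulVec_apply, dotProduct, mulVec,
    Finset.mul_sum]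
  exact Finset.sum_congr rfl fun i _ => Finset.sum_congr rfl fun j _ => by ring

lemma det_one_add_smul_vmv (c : ℝ) (a : Fin n → ℝ) :
    (1 + c • vecMulVec a a).det = 1 + c * (a ⬝ᵥ a) := by
  have h : c • vecMulVec a a = vecMulVec (c • a) a := by
    ext i j; simp [vecMulVec_apply]; ring
  rw [h, vecMulVec_eq Unit, det_one_add_replicateCol_mul_replicateRow]
  simp [dotProduct, Finset.mul_sum]
  exact Finset.sum_congr rfl fun i _ => by ring

theorem stmt_11 {n k : ℕ} (S : Matrix (Fin n) (Fin n) ℝ) (hS : S.PosDef)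
    (d : Fin k → Fin n → ℝ)
    (horth : ∀ i j, d i ⬝ᵥ d j = if i = j then (1 : ℝ) else 0)
    (v : Fin k → ℝ) (hv : ∀ i, 0 < v i) :
    (∑ i, ell (d i ⬝ᵥ S *ᵥ d i)) + S.trace ≤
      Dp S (1 + ∑ i, (v i - 1) • Matrix.vecMulVec (d i) (d i)) ∧
    (Dp S (1 + ∑ i, (v i - 1) • Matrix.vecMulVec (d i) (d i)) =
        (∑ i, ell (d i ⬝ᵥ S *ᵥ d i)) + S.trace ↔ ∀ i, v i = d i ⬝ᵥ S *ᵥ d i) := by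
  classical
  set W : Fin k → Matrix (Fin n) (Fin n) ℝ := fun i => vecMulVec (d i) (d i) with hW
  set A : Matrix (Fin n) (Fin n) ℝ := 1 + ∑ i, (v i - 1) • W i with hA
  set s : Fin k → ℝ := fun i => d i ⬝ᵥ S *ᵥ d i with hsdef
  -- d i ≠ 0
  have hd0 : ∀ i, d i ≠ 0 := by
    intro i hz
    have := horth i i
    rw [hz] at this
    simp at this
  have hs : ∀ i, 0 < s i := by
    intro i
    have := hS.dotProduct_mulVec_pos (hd0 i)
    simpa [hsdef] using this
  -- product of smul-W sums
  have hWmul : ∀ (i j : Fin k), W i * W j = if i = j then W i else 0 := by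
    intro i j
    rw [hW]
    simp only [vmv_mul_vmv, horth]
    split <;> simp_all
  -- determinant over any finset
  have hdet : ∀ t : Finset (Fin k),
      (1 + ∑ i ∈ t, (v i - 1) • W i).det = ∏ i ∈ t, v i := by
    intro t
    induction t using Finset.induction with
    | empty => simp
    | @insert a t ha ih =>
      have key : (1 + ∑ i ∈ insert a t, (v i - 1) • W i)
          = (1 + ∑ i ∈ t, (v i - 1) • W i) * (1 + (v a - 1) • W a) := by
        rw [Finset.sum_insert ha]
        rw [mul_add, mul_one, add_mul, one_mul, Finset.sum_mul]
        have hz : ∀ i ∈ t, ((v i - 1) • W i) * ((v a - 1) • W a) = 0 := by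
          intro i hi
          rw [smul_mul_assoc, mul_smul_comm, hWmul i a, if_neg (by rintro rfl; exact ha hi)]
          simp
        rw [Finset.sum_eq_zero hz]
        abel
      rw [key, det_mul, ih, det_one_add_smul_vmv, Finset.prod_insert ha]
      rw [horth a a]
      simp [mul_comm]
  have hdetA : A.det = ∏ i, v i := hdet Finset.univ
  have hvne : ∀ i, v i ≠ 0 := fun i => (hv i).ne'
  -- inverse
  set B : Matrix (Fin n) (Fin n) ℝ := 1 + ∑ i, ((v i)⁻¹ - 1) • W i with hB
  have hABone : A * B = 1 := by
    have hcross : ∀ i j : Fin k, ((v i - 1) • W i) * (((v j)⁻¹ - 1) • W j)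
        = if i = j then ((v i - 1) * ((v i)⁻¹ - 1)) • W i else 0 := by
      intro i j
      rw [smul_mul_assoc, mul_smul_comm, hWmul i j]
      split
      · rename_i h; subst h; rw [smul_smul]
      · simp
    have hsum : (∑ i, (v i - 1) • W i) * (∑ j, ((v j)⁻¹ - 1) • W j)
        = ∑ i, ((v i - 1) * ((v i)⁻¹ - 1)) • W i := by
      rw [Finset.sum_mul_sum]
      refine Finset.sum_congr rfl fun i _ => ?_
      rw [Finset.sum_congr rfl fun j _ => hcross i j]
      simp
    have step : A * B = 1 + ((∑ i, (v i - 1) • W i) + (∑ i, ((v i)⁻¹ - 1) • W i)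
        + ∑ i, ((v i - 1) * ((v i)⁻¹ - 1)) • W i) := by
      rw [hA, hB, add_mul, one_mul, mul_add, mul_one, hsum]
      abel
    rw [step, ← Finset.sum_add_distrib, ← Finset.sum_add_distrib]
    have hcoef : ∀ i ∈ Finset.univ,
        ((v i - 1) • W i + ((v i)⁻¹ - 1) • W i) + ((v i - 1) * ((v i)⁻¹ - 1)) • W i
          = (0 : Matrix (Fin n) (Fin n) ℝ) := by
      intro i _
      rw [← add_smul, ← add_smul]
      have hc : (v i - 1 + ((v i)⁻¹ - 1)) + (v i - 1) * ((v i)⁻¹ - 1) = 0 := by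
        field_simp [hvne i]
        ring
      rw [hc, zero_smul]
    rw [Finset.sum_eq_zero hcoef, add_zero]
  have hAinv : A⁻¹ = B := inv_eq_right_inv hABone
  -- trace
  have htr : (S * B).trace = S.trace + ∑ i, ((v i)⁻¹ - 1) * s i := by
    rw [hB, mul_add, mul_one, Matrix.mul_sum, trace_add, trace_sum]
    congr 1
    refine Finset.sum_congr rfl fun i _ => ?_
    rw [mul_smul_comm, trace_smul, hW]
    simp only [trace_mul_vmv]
    simp [hsdef]
  -- Dp value
  have hDp : Dp S A = (∑ i, Real.log (v i)) + (S.trace + ∑ i, ((v i)⁻¹ - 1) * s i) := by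
    rw [Dp, hAinv, htr, hdetA, Real.log_prod fun i _ => hvne i]
  -- per-index excess
  set f : Fin k → ℝ := fun i => (s i / v i - 1) - Real.log (s i / v i) with hf
  have hkey : Dp S A = ((∑ i, ell (s i)) + S.trace) + ∑ i, f i := by
    rw [hDp]
    have hterm : ∀ i : Fin k, Real.log (v i) + ((v i)⁻¹ - 1) * s i = ell (s i) + f i := by
      intro i
      simp only [hf, ell]
      rw [Real.log_div (hs i).ne' (hvne i)]
      field_simp
      ring
    have h1 : (∑ i, Real.log (v i)) + ∑ i, ((v i)⁻¹ - 1) * s i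
        = (∑ i, ell (s i)) + ∑ i, f i := by
      rw [← Finset.sum_add_distrib, ← Finset.sum_add_distrib]
      exact Finset.sum_congr rfl fun i _ => hterm i
    linarith
  have hfnonneg : ∀ i, 0 ≤ f i := by
    intro i
    have ht : 0 < s i / v i := div_pos (hs i) (hv i)
    have := Real.log_le_sub_one_of_pos ht
    rw [hf]; dsimp only; linarith
  have hfzero : ∀ i, f i = 0 ↔ v i = s i := by
    intro i
    have ht : 0 < s i / v i := div_pos (hs i) (hv i)
    constructor
    · intro h0
      by_contra hne
      have hne1 : s i / v i ≠ 1 := by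
        intro h1
        rw [div_eq_one_iff_eq (hvne i)] at h1
        exact hne h1.symm
      have := Real.log_lt_sub_one_of_pos ht hne1
      rw [hf] at h0; dsimp only at h0; linarith
    · intro h
      rw [hf]; dsimp only
      rw [h, div_self (hs i).ne']
      simp
  constructor
  · rw [hkey]
    have : 0 ≤ ∑ i, f i := Finset.sum_nonneg fun i _ => hfnonneg i
    linarith
  · rw [hkey]
    constructor
    · intro h
      have hsum0 : ∑ i, f i = 0 := by linarith
      have := (Finset.sum_eq_zero_iff_of_nonneg fun i _ => hfnonneg i).1 hsum0
      intro i
      exact (hfzero i).1 (this i (Finset.mem_univ i))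
    · intro h
      have : ∑ i, f i = 0 :=
        Finset.sum_eq_zero fun i _ => (hfzero i).2 (h i)
      rw [this, add_zero]
end

section
/- Let S and Σ be real symmetric positive definite n×n matrices. Then log det(Σ) + tr(S Σ⁻¹) ≥ log det(S) + n, with equality if and only if Σ = S. In particular, Σ = S is the unique minimizer of D' over all real symmetric positive definite n×n matrices. -/
open Matrix

private lemma log_add_one_le_self {x : ℝ} (hx : 0 < x) : Real.log x + 1 ≤ x := by
  have := Real.add_one_le_exp (Real.log x)
  rwa [Real.exp_log hx] at this

private lemma eq_one_of_log_add_one_eq {x : ℝ} (hx : 0 < x) (h : Real.log x + 1 = x) : x = 1 := by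
  by_contra hne
  have hlog : Real.log x ≠ 0 := by
    intro h0
    exact hne (by rw [← Real.exp_log hx, h0, Real.exp_zero])
  have := Real.add_one_lt_exp hlog
  rw [Real.exp_log hx] at this
  linarith

private lemma posDef_conj {n : ℕ} {S B : Matrix (Fin n) (Fin n) ℝ} (hS : S.PosDef)
    (hB : IsUnit B) : (Bᴴ * S * B).PosDef := by
  refine PosDef.of_dotProduct_mulVec_pos (isHermitian_conjTranspose_mul_mul B hS.1) fun x hx => ?_
  have hBx : B *ᵥ x ≠ 0 := by
    intro h
    apply hx
    have hinj := Matrix.mulVec_injective_iff_isUnit.mpr hB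
    have : B *ᵥ x = B *ᵥ 0 := by rw [h, Matrix.mulVec_zero]
    exact hinj this
  simpa only [star_mulVec, dotProduct_mulVec, vecMul_vecMul] using hS.dotProduct_mulVec_pos hBx

theorem stmt_13 {n : ℕ} (S A : Matrix (Fin n) (Fin n) ℝ)
    (hS : S.PosDef) (hA : A.PosDef) :
    Real.log S.det + n ≤ Real.log A.det + (S * A⁻¹).trace ∧
    (Real.log A.det + (S * A⁻¹).trace = Real.log S.det + n ↔ A = S) := by
  have hAi : A⁻¹.PosDef := hA.inv
  set C := open scoped MatrixOrder in CFC.sqrt A⁻¹ with hCdef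
  have hC : C.PosSemidef := open scoped MatrixOrder in nonneg_iff_posSemidef.mp (CFC.sqrt_nonneg A⁻¹)
  have hCC : C * C = A⁻¹ := open scoped MatrixOrder in CFC.sqrt_mul_sqrt_self A⁻¹ (nonneg_iff_posSemidef.mpr hAi.posSemidef)
  have hCH : Cᴴ = C := hC.1
  have hdetAi : (0:ℝ) < A⁻¹.det := hAi.det_pos
  have hdetCsq : C.det * C.det = A⁻¹.det := by rw [← det_mul, hCC]
  have hdetCne : C.det ≠ 0 := by
    intro h; rw [h, mul_zero] at hdetCsq; exact hdetAi.ne' hdetCsq.symm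
  have hCunit : IsUnit C := (Matrix.isUnit_iff_isUnit_det C).mpr (isUnit_iff_ne_zero.mpr hdetCne)
  have hB : (C * S * C).PosDef := by
    have := posDef_conj hS hCunit; rwa [hCH] at this
  set B := C * S * C with hBdef
  -- trace of B
  have htr : B.trace = (S * A⁻¹).trace := by
    rw [hBdef, Matrix.trace_mul_cycle, hCC, Matrix.trace_mul_comm]
  -- det of B
  have hdetB : B.det = S.det * A.det⁻¹ := by
    have hAA : A⁻¹.det = A.det⁻¹ := by rw [Matrix.det_nonsing_inv, Ring.inverse_eq_inv']
    rw [hBdef, det_mul, det_mul, ← hAA, ← hdetCsq]; ring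
  -- eigenvalues
  set μ := hB.1.eigenvalues with hμdef
  have hμpos : ∀ i, 0 < μ i := hB.eigenvalues_pos
  have hdetμ : B.det = ∏ i, μ i := by
    have := hB.1.det_eq_prod_eigenvalues
    simpa using this
  have hU : (hB.1.eigenvectorUnitary : Matrix (Fin n) (Fin n) ℝ) *
      star (hB.1.eigenvectorUnitary : Matrix (Fin n) (Fin n) ℝ) = 1 :=
    (Matrix.mem_unitaryGroup_iff).mp hB.1.eigenvectorUnitary.2
  have hU' : star (hB.1.eigenvectorUnitary : Matrix (Fin n) (Fin n) ℝ) *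
      (hB.1.eigenvectorUnitary : Matrix (Fin n) (Fin n) ℝ) = 1 :=
    (Matrix.mem_unitaryGroup_iff').mp hB.1.eigenvectorUnitary.2
  have htrμ : B.trace = ∑ i, μ i := by
    conv_lhs => rw [hB.1.spectral_theorem, Unitary.conjStarAlgAut_apply]
    rw [Matrix.trace_mul_cycle, hU', Matrix.one_mul, Matrix.trace_diagonal]
    simp
    rfl
  have hlogdet : Real.log B.det = Real.log S.det - Real.log A.det := by
    rw [hdetB, Real.log_mul hS.det_pos.ne' (inv_ne_zero hA.det_pos.ne'), Real.log_inv]; ring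
  have hlogprod : Real.log B.det = ∑ i, Real.log (μ i) := by
    rw [hdetμ, Real.log_prod (fun i _ => (hμpos i).ne')]
  have hkey : ∑ i, (Real.log (μ i) + 1) = Real.log S.det - Real.log A.det + n := by
    rw [Finset.sum_add_distrib, ← hlogprod, hlogdet]
    simp [Finset.card_univ]
  have hle : ∑ i, (Real.log (μ i) + 1) ≤ ∑ i, μ i :=
    Finset.sum_le_sum fun i _ => log_add_one_le_self (hμpos i)
  have htrS : (S * A⁻¹).trace = ∑ i, μ i := by rw [← htr, htrμ]
  constructor
  · rw [htrS]; linarith [hkey, hle]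
  constructor
  · intro heq
    have hsumeq : ∑ i, (Real.log (μ i) + 1) = ∑ i, μ i := by
      rw [hkey, ← htrS]; linarith
    have hall : ∀ i ∈ Finset.univ, Real.log (μ i) + 1 = μ i :=
      (Finset.sum_eq_sum_iff_of_le (fun i _ => log_add_one_le_self (hμpos i))).mp hsumeq
    have hone : ∀ i, μ i = 1 := fun i =>
      eq_one_of_log_add_one_eq (hμpos i) (hall i (Finset.mem_univ i))
    have hB1 : B = 1 := by
      conv_lhs => rw [hB.1.spectral_theorem, Unitary.conjStarAlgAut_apply]
      have : (RCLike.ofReal ∘ hB.1.eigenvalues : Fin n → ℝ) = fun _ => 1 := by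
        funext i; simp [← hμdef, hone i]
      rw [this]
      simp only [Matrix.diagonal_one, Matrix.mul_one]
      exact hU
    have hSrec : C⁻¹ * B * C⁻¹ = S := by
      have hCu := isUnit_iff_ne_zero.mpr hdetCne
      calc C⁻¹ * B * C⁻¹ = C⁻¹ * C * S * (C * C⁻¹) := by
            rw [hBdef]; simp only [Matrix.mul_assoc]
        _ = S := by
            rw [Matrix.nonsing_inv_mul C hCu, Matrix.mul_nonsing_inv C hCu,
              Matrix.one_mul, Matrix.mul_one]
    have hArec : C⁻¹ * C⁻¹ = A := by
      rw [← Matrix.mul_inv_rev, hCC, Matrix.nonsing_inv_nonsing_inv A hA.det_pos.ne'.isUnit]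
    rw [hB1, Matrix.mul_one] at hSrec
    rw [← hArec, hSrec]
  · intro hAS
    subst hAS
    rw [Matrix.mul_nonsing_inv A hA.det_pos.ne'.isUnit, Matrix.trace_one]
    simp
end

section
/- Let μ be a probability measure on ℝ^n admitting a density p with respect to Lebesgue measure, with finite second moment, mean m* and covariance matrix Σ*, and assume Σ* is positive definite and D(p, g_{m*,Σ*}) < ∞. Then for every m ∈ ℝ^n and every real symmetric positive definite n×n matrix Σ, D(p, g_{m*,Σ*}) ≤ D(p, g_{m,Σ}); that is, (m*, Σ*) minimizes the Kullback–Leibler divergence from p to the Gaussian family. -/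
open Matrix MeasureTheory
open scoped ENNReal

noncomputable def gauss {n : ℕ} (m : Fin n → ℝ) (A : Matrix (Fin n) (Fin n) ℝ)
    (x : Fin n → ℝ) : ℝ :=
  (Real.sqrt ((2 * Real.pi) ^ n * A.det))⁻¹ *
    Real.exp (-((x - m) ⬝ᵥ A⁻¹ *ᵥ (x - m)) / 2)

open Classical in
/-- Kullback--Leibler divergence `D(p,h) = ∫ log(p(x)/h(x)) p(x) dx`, valued in `ℝ≥0∞`,
set to `∞` when the defining integral is not (Lebesgue-)integrable. -/
noncomputable def KL {n : ℕ} (p h : (Fin n → ℝ) → ℝ) : ℝ≥0∞ :=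
  if Integrable (fun x => Real.log (p x / h x) * p x) volume
  then ENNReal.ofReal (∫ x, Real.log (p x / h x) * p x)
  else ⊤

section aux

lemma herm_trace_eq_sum {n : ℕ} {M : Matrix (Fin n) (Fin n) ℝ} (hM : M.IsHermitian) :
    M.trace = ∑ i, hM.eigenvalues i := by
  simpa using hM.trace_eq_sum_eigenvalues

lemma eig_pos_of_det_pos {n : ℕ} {M : Matrix (Fin n) (Fin n) ℝ} (hM : M.PosSemidef)
    (hdet : 0 < M.det) (i : Fin n) : 0 < hM.1.eigenvalues i := by
  rcases lt_or_eq_of_le (hM.eigenvalues_nonneg i) with h | h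
  · exact h
  · exfalso
    rw [hM.1.det_eq_prod_eigenvalues] at hdet
    simp only [RCLike.ofReal_real_eq_id, id] at hdet
    have h0 : (∏ j, hM.1.eigenvalues j) = 0 := Finset.prod_eq_zero (Finset.mem_univ i) h.symm
    rw [h0] at hdet
    exact lt_irrefl 0 hdet

open scoped MatrixOrder in
lemma trace_log_ineq {n : ℕ} {S A : Matrix (Fin n) (Fin n) ℝ} (hS : S.PosDef) (hA : A.PosDef) :
    Real.log S.det - Real.log A.det + n ≤ (A⁻¹ * S).trace := by
  set R := CFC.sqrt S with hRdef
  have hR : R.PosSemidef := (CFC.sqrt_nonneg S).posSemidef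
  have hRR : R * R = S := CFC.sqrt_mul_sqrt_self S hS.posSemidef.nonneg
  have hM : (R * A⁻¹ * R).PosSemidef := by
    have := hA.inv.posSemidef.mul_mul_conjTranspose_same R
    rwa [hR.1.eq] at this
  set M := R * A⁻¹ * R with hMdef
  have hdetM : M.det = A.det⁻¹ * S.det := by
    rw [hMdef, Matrix.det_mul, Matrix.det_mul, ← hRR, Matrix.det_mul,
      Matrix.det_nonsing_inv, Ring.inverse_eq_inv]; ring
  have hdetApos : 0 < A.det := hA.det_pos
  have hdetSpos : 0 < S.det := hS.det_pos
  have hdetMpos : 0 < M.det := by rw [hdetM]; positivity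
  have heig : ∀ i, 0 < hM.1.eigenvalues i := eig_pos_of_det_pos hM hdetMpos
  have htr : M.trace = (A⁻¹ * S).trace := by
    rw [hMdef, Matrix.trace_mul_cycle, hRR, Matrix.trace_mul_comm]
  have htrsum : M.trace = ∑ i, hM.1.eigenvalues i := herm_trace_eq_sum hM.1
  have hlogdet : Real.log M.det = ∑ i, Real.log (hM.1.eigenvalues i) := by
    rw [hM.1.det_eq_prod_eigenvalues]
    simp only [RCLike.ofReal_real_eq_id, id]
    rw [Real.log_prod (fun i _ => (heig i).ne')]
  have key : Real.log M.det ≤ M.trace - n := by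
    rw [hlogdet, htrsum]
    calc ∑ i, Real.log (hM.1.eigenvalues i) ≤ ∑ i : Fin n, (hM.1.eigenvalues i - 1) :=
          Finset.sum_le_sum fun i _ => Real.log_le_sub_one_of_pos (heig i)
      _ = (∑ i, hM.1.eigenvalues i) - n := by rw [Finset.sum_sub_distrib]; simp
  have hlogM : Real.log M.det = Real.log S.det - Real.log A.det := by
    rw [hdetM, Real.log_mul (by positivity) hdetSpos.ne', Real.log_inv]; ring
  rw [← htr]
  linarith [key, hlogM]

lemma gauss_pos {n : ℕ} {m : Fin n → ℝ} {A : Matrix (Fin n) (Fin n) ℝ} (hA : A.PosDef)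
    (x : Fin n → ℝ) : 0 < gauss m A x := by
  have h1 : 0 < (2 * Real.pi) ^ n * A.det := by
    have := Real.pi_pos
    have := hA.det_pos
    positivity
  have h2 : 0 < Real.sqrt ((2 * Real.pi) ^ n * A.det) := Real.sqrt_pos.mpr h1
  unfold gauss
  positivity

lemma log_gauss {n : ℕ} {m : Fin n → ℝ} {A : Matrix (Fin n) (Fin n) ℝ} (hA : A.PosDef)
    (x : Fin n → ℝ) : Real.log (gauss m A x) =
      -(Real.log ((2 * Real.pi) ^ n * A.det)) / 2 - ((x - m) ⬝ᵥ A⁻¹ *ᵥ (x - m)) / 2 := by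
  have h1 : 0 < (2 * Real.pi) ^ n * A.det := by
    have := Real.pi_pos
    have := hA.det_pos
    positivity
  have h2 : 0 < Real.sqrt ((2 * Real.pi) ^ n * A.det) := Real.sqrt_pos.mpr h1
  unfold gauss
  rw [Real.log_mul (by positivity) (Real.exp_ne_zero _), Real.log_inv,
    Real.log_exp, Real.log_sqrt h1.le]
  ring

lemma quad_eq_sum {n : ℕ} (B : Matrix (Fin n) (Fin n) ℝ) (c x : Fin n → ℝ) :
    (x - c) ⬝ᵥ B *ᵥ (x - c) = ∑ i, ∑ j, B i j * ((x i - c i) * (x j - c j)) := by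
  simp only [dotProduct, mulVec, Pi.sub_apply, Finset.mul_sum]
  exact Finset.sum_congr rfl fun i _ => Finset.sum_congr rfl fun j _ => by ring

lemma sum_mul_symm {n : ℕ} (B S : Matrix (Fin n) (Fin n) ℝ) (hSymm : ∀ i j, S j i = S i j) :
    ∑ i, ∑ j, B i j * S i j = (B * S).trace := by
  rw [Matrix.trace]
  refine Finset.sum_congr rfl fun i _ => ?_
  rw [Matrix.diag_apply, Matrix.mul_apply]
  exact Finset.sum_congr rfl fun j _ => by rw [hSymm i j]

end aux

theorem stmt_17 {n : ℕ} (p : (Fin n → ℝ) → ℝ) (hp0 : ∀ x, 0 ≤ p x)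
    (hpmeas : Measurable p)
    (μ : Measure (Fin n → ℝ))
    (hμ : μ = volume.withDensity fun x => ENNReal.ofReal (p x))
    [IsProbabilityMeasure μ]
    (hmom : Integrable (fun x => ‖x‖ ^ 2) μ)
    (mstar : Fin n → ℝ) (hm : mstar = ∫ x, x ∂μ)
    (Sstar : Matrix (Fin n) (Fin n) ℝ)
    (hS : Sstar = Matrix.of fun i j => ∫ x, (x i - mstar i) * (x j - mstar j) ∂μ)
    (hSpd : Sstar.PosDef)
    (hfin : KL p (gauss mstar Sstar) ≠ ⊤) :
    ∀ (m : Fin n → ℝ) (A : Matrix (Fin n) (Fin n) ℝ), A.PosDef →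
      KL p (gauss mstar Sstar) ≤ KL p (gauss m A) := by
  classical
  intro m A hA
  -- notation
  set gs := gauss mstar Sstar with hgs
  set ga := gauss m A with hga
  have hgspos : ∀ x, 0 < gs x := fun x => gauss_pos hSpd x
  have hgapos : ∀ x, 0 < ga x := fun x => gauss_pos hA x
  -- integrability of the KL integrand for gs
  have hIstar : Integrable (fun x => Real.log (p x / gs x) * p x) volume := by
    by_contra h
    exact hfin (by rw [KL, if_neg h])
  by_cases hIA : Integrable (fun x => Real.log (p x / ga x) * p x) volume
  swap
  · have : KL p ga = ⊤ := by rw [KL]; exact if_neg hIA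
    rw [this]; exact le_top
  have e1 : KL p gs = ENNReal.ofReal (∫ x, Real.log (p x / gs x) * p x) := by
    rw [KL]; exact if_pos hIstar
  have e2 : KL p ga = ENNReal.ofReal (∫ x, Real.log (p x / ga x) * p x) := by
    rw [KL]; exact if_pos hIA
  rw [e1, e2]
  apply ENNReal.ofReal_le_ofReal
  -- pointwise splitting
  have hsplit : ∀ x, Real.log (p x / ga x) * p x
      = Real.log (p x / gs x) * p x + Real.log (gs x / ga x) * p x := by
    intro x
    rcases eq_or_lt_of_le (hp0 x) with h0 | h0
    · rw [← h0]; ring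
    · rw [Real.log_div h0.ne' (hgapos x).ne', Real.log_div h0.ne' (hgspos x).ne',
        Real.log_div (hgspos x).ne' (hgapos x).ne']
      ring
  have hJint : Integrable (fun x => Real.log (gs x / ga x) * p x) volume := by
    have : (fun x => Real.log (gs x / ga x) * p x)
        = fun x => Real.log (p x / ga x) * p x - Real.log (p x / gs x) * p x := by
      funext x; rw [hsplit x]; ring
    rw [this]
    exact hIA.sub hIstar
  have hintsum : (∫ x, Real.log (p x / ga x) * p x)
      = (∫ x, Real.log (p x / gs x) * p x) + ∫ x, Real.log (gs x / ga x) * p x := by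
    rw [← integral_add hIstar hJint]
    exact integral_congr_ae (Filter.Eventually.of_forall fun x => hsplit x)
  rw [hintsum]
  have hJnonneg : 0 ≤ ∫ x, Real.log (gs x / ga x) * p x := by
    -- basic integrability under μ
    have h2m : Integrable (fun x : Fin n → ℝ => ‖x‖ ^ 2 + 1) μ := hmom.add (integrable_const 1)
    have hnormle : ∀ x : Fin n → ℝ, ‖x‖ ≤ ‖x‖ ^ 2 + 1 := fun x => by nlinarith [norm_nonneg x]
    have hxi : ∀ i, Integrable (fun x : Fin n → ℝ => x i) μ := by
      intro i
      refine h2m.mono' (measurable_pi_apply i).aestronglyMeasurable (ae_of_all _ fun x => ?_)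
      calc ‖x i‖ ≤ ‖x‖ := norm_le_pi_norm x i
        _ ≤ ‖x‖ ^ 2 + 1 := hnormle x
    have hxij : ∀ i j, Integrable (fun x : Fin n → ℝ => x i * x j) μ := by
      intro i j
      refine hmom.mono' (((measurable_pi_apply i).mul (measurable_pi_apply j)).aestronglyMeasurable)
        (ae_of_all _ fun x => ?_)
      calc ‖x i * x j‖ = ‖x i‖ * ‖x j‖ := norm_mul _ _
        _ ≤ ‖x‖ * ‖x‖ :=
          mul_le_mul (norm_le_pi_norm x i) (norm_le_pi_norm x j) (norm_nonneg _) (norm_nonneg _)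
        _ = ‖x‖ ^ 2 := (sq ‖x‖).symm
    have hprod : ∀ (i j : Fin n) (a b : ℝ),
        Integrable (fun x : Fin n → ℝ => (x i - a) * (x j - b)) μ := by
      intro i j a b
      have : (fun x : Fin n → ℝ => (x i - a) * (x j - b))
          = fun x => (x i * x j - b * x i) - (a * x j - a * b) := funext fun x => by ring
      rw [this]
      exact ((hxij i j).sub ((hxi i).const_mul b)).sub (((hxi j).const_mul a).sub
        (integrable_const _))
    have hid : Integrable (fun x : Fin n → ℝ => x) μ := by
      refine h2m.mono' measurable_id.aestronglyMeasurable (ae_of_all _ fun x => hnormle x)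
    have hmean : ∀ i, (∫ x, x i ∂μ) = mstar i := by
      intro i
      have h := (ContinuousLinearMap.proj (R := ℝ) (φ := fun _ : Fin n => ℝ) i).integral_comp_comm
        hid
      simp only [ContinuousLinearMap.proj_apply] at h
      rw [h, ← hm]
    have hcent : ∀ i, (∫ x, (x i - mstar i) ∂μ) = 0 := by
      intro i
      rw [integral_sub (hxi i) (integrable_const _), hmean, integral_const, probReal_univ]
      simp
    have hcov : ∀ i j, (∫ x, (x i - mstar i) * (x j - mstar j) ∂μ) = Sstar i j := by
      intro i j
      rw [hS]; rfl
    have hcentint : ∀ i, Integrable (fun x : Fin n → ℝ => x i - mstar i) μ :=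
      fun i => (hxi i).sub (integrable_const _)
    have hgen : ∀ (i j : Fin n) (a b : ℝ),
        (∫ x, (x i - a) * (x j - b) ∂μ) = Sstar i j + (mstar i - a) * (mstar j - b) := by
      intro i j a b
      have hpt : (fun x : Fin n → ℝ => (x i - a) * (x j - b))
          = fun x => ((x i - mstar i) * (x j - mstar j)
              + ((mstar j - b) * (x i - mstar i) + (mstar i - a) * (x j - mstar j)))
              + (mstar i - a) * (mstar j - b) := funext fun x => by ring
      have hI1 : Integrable (fun x : Fin n → ℝ =>
          (mstar j - b) * (x i - mstar i) + (mstar i - a) * (x j - mstar j)) μ :=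
        ((hcentint i).const_mul _).add ((hcentint j).const_mul _)
      have hI2 : Integrable (fun x : Fin n → ℝ => (x i - mstar i) * (x j - mstar j)
          + ((mstar j - b) * (x i - mstar i) + (mstar i - a) * (x j - mstar j))) μ :=
        (hprod i j _ _).add hI1
      rw [hpt, integral_add hI2 (integrable_const _), integral_add (hprod i j _ _) hI1,
        integral_add ((hcentint i).const_mul _) ((hcentint j).const_mul _),
        integral_const_mul, integral_const_mul, hcov, hcent, hcent, integral_const, probReal_univ]
      simp
    have hquadint : ∀ (B : Matrix (Fin n) (Fin n) ℝ) (c : Fin n → ℝ),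
        Integrable (fun x : Fin n → ℝ => (x - c) ⬝ᵥ B *ᵥ (x - c)) μ := by
      intro B c
      have : (fun x : Fin n → ℝ => (x - c) ⬝ᵥ B *ᵥ (x - c))
          = fun x => ∑ i, ∑ j, B i j * ((x i - c i) * (x j - c j)) :=
        funext fun x => quad_eq_sum B c x
      rw [this]
      exact integrable_finset_sum _ fun i _ =>
        integrable_finset_sum _ fun j _ => (hprod i j _ _).const_mul _
    have hquadval : ∀ (B : Matrix (Fin n) (Fin n) ℝ) (c : Fin n → ℝ),
        (∫ x, (x - c) ⬝ᵥ B *ᵥ (x - c) ∂μ)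
          = ∑ i, ∑ j, B i j * (Sstar i j + (mstar i - c i) * (mstar j - c j)) := by
      intro B c
      have h1 : (fun x : Fin n → ℝ => (x - c) ⬝ᵥ B *ᵥ (x - c))
          = fun x => ∑ i, ∑ j, B i j * ((x i - c i) * (x j - c j)) :=
        funext fun x => quad_eq_sum B c x
      rw [h1]
      refine (integral_finset_sum _ fun i _ =>
        integrable_finset_sum _ fun j _ => (hprod i j _ _).const_mul _).trans ?_
      refine Finset.sum_congr rfl fun i _ => ?_
      refine (integral_finset_sum _ fun j _ => (hprod i j _ _).const_mul _).trans ?_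
      refine Finset.sum_congr rfl fun j _ => ?_
      rw [integral_const_mul, hgen]
    -- the function under μ
    set f : (Fin n → ℝ) → ℝ := fun x => Real.log (gs x / ga x) with hf
    have hfform : f = fun x => (Real.log A.det - Real.log Sstar.det) / 2
        + ((x - m) ⬝ᵥ A⁻¹ *ᵥ (x - m)) / 2 - ((x - mstar) ⬝ᵥ Sstar⁻¹ *ᵥ (x - mstar)) / 2 := by
      funext x
      have hppow : (0:ℝ) < (2 * Real.pi) ^ n := by positivity
      simp only [hf]
      rw [Real.log_div (hgspos x).ne' (hgapos x).ne', hgs, hga, log_gauss hSpd x, log_gauss hA x,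
        Real.log_mul hppow.ne' hSpd.det_pos.ne', Real.log_mul hppow.ne' hA.det_pos.ne']
      ring
    -- change of measure
    have hchg : (∫ x, Real.log (gs x / ga x) * p x) = ∫ x, f x ∂μ := by
      have hμ' : μ = volume.withDensity fun x => ((fun x => (p x).toNNReal) x : ℝ≥0∞) := by
        rw [hμ]; rfl
      rw [hμ', integral_withDensity_eq_integral_smul
        (by exact measurable_real_toNNReal.comp hpmeas) f]
      refine integral_congr_ae (ae_of_all _ fun x => ?_)
      have : ((p x).toNNReal : ℝ) = p x := Real.coe_toNNReal _ (hp0 x)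
      simp only [NNReal.smul_def, smul_eq_mul, this]
      exact mul_comm _ _
    rw [hchg, hfform]
    have hint2 : Integrable (fun x : Fin n → ℝ => (Real.log A.det - Real.log Sstar.det) / 2
        + ((x - m) ⬝ᵥ A⁻¹ *ᵥ (x - m)) / 2) μ :=
      (integrable_const _).add ((hquadint A⁻¹ m).div_const 2)
    rw [integral_sub hint2 ((hquadint Sstar⁻¹ mstar).div_const 2),
      integral_add (integrable_const _) ((hquadint A⁻¹ m).div_const 2),
      integral_const, integral_div, integral_div]
    rw [hquadval A⁻¹ m, hquadval Sstar⁻¹ mstar, probReal_univ]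
    -- evaluate the two quadratic integrals
    have hSsymm : ∀ i j, Sstar j i = Sstar i j := by
      intro i j
      calc Sstar j i = Sstarᴴ i j := by simp [Matrix.conjTranspose_apply]
        _ = Sstar i j := by rw [hSpd.1]
    have hQs : (∑ i, ∑ j, Sstar⁻¹ i j * (Sstar i j + (mstar i - mstar i) * (mstar j - mstar j)))
        = (n : ℝ) := by
      have : ∀ i j, Sstar⁻¹ i j * (Sstar i j + (mstar i - mstar i) * (mstar j - mstar j))
          = Sstar⁻¹ i j * Sstar i j := by intro i j; ring
      simp only [this]
      rw [sum_mul_symm _ _ hSsymm, Matrix.nonsing_inv_mul _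
        (isUnit_iff_ne_zero.mpr hSpd.det_pos.ne'), Matrix.trace_one]
      simp
    have hQa : (∑ i, ∑ j, A⁻¹ i j * (Sstar i j + (mstar i - m i) * (mstar j - m j)))
        = (A⁻¹ * Sstar).trace + (mstar - m) ⬝ᵥ A⁻¹ *ᵥ (mstar - m) := by
      have hsplit2 : ∀ i j, A⁻¹ i j * (Sstar i j + (mstar i - m i) * (mstar j - m j))
          = A⁻¹ i j * Sstar i j + A⁻¹ i j * ((mstar i - m i) * (mstar j - m j)) := by
        intro i j; ring
      simp only [hsplit2, Finset.sum_add_distrib]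
      rw [sum_mul_symm _ _ hSsymm, quad_eq_sum A⁻¹ m mstar]
    rw [hQs, hQa]
    have hT2 : 0 ≤ (mstar - m) ⬝ᵥ A⁻¹ *ᵥ (mstar - m) := by
      by_cases hd : mstar - m = 0
      · rw [hd]; simp
      · have := hA.inv.dotProduct_mulVec_pos hd
        simpa using this.le
    have htri := trace_log_ineq hSpd hA
    simp only [measure_univ, ENNReal.toReal_one, one_smul, smul_eq_mul]
    linarith
  linarith
end
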